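/- Let X and Y be complex m×m matrices with Im X and Im Y positive definite. Then Im(X(X+Y)⁻¹Y) = Y(X+Y)⁻¹ Im(X) ((X+Y)*)⁻¹ Y* + X(X+Y)⁻¹ Im(Y) ((X+Y)*)⁻¹ X*. -/

import Mathlib

open Matrix
open scoped ComplexOrder

noncomputable def matIm {m : ℕ} (Z : Matrix (Fin m) (Fin m) ℂ) :
    Matrix (Fin m) (Fin m) ℂ := (2 * Complex.I)⁻¹ • (Z - Zᴴ)

lemma isUnit_of_posDef_matIm {m : ℕ} {Z : Matrix (Fin m) (Fin m) ℂ}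
    (h : (matIm Z).PosDef) : IsUnit Z.det := by
  rw [← Matrix.isUnit_iff_isUnit_det, ← Matrix.mulVec_injective_iff_isUnit]
  intro u v huv
  by_contra hne
  have hv : Z *ᵥ (u - v) = 0 := by
    simp [Matrix.mulVec_sub, huv]
  have h0 : u - v ≠ 0 := sub_ne_zero.mpr hne
  have := h.dotProduct_mulVec_pos h0
  rw [matIm] at this
  have hq : star (u - v) ⬝ᵥ ((2 * Complex.I)⁻¹ • (Z - Zᴴ)) *ᵥ (u - v) = 0 := by
    have h1 : star (u - v) ⬝ᵥ Z *ᵥ (u - v) = 0 := by rw [hv]; simp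
    have h2 : star (u - v) ⬝ᵥ Zᴴ *ᵥ (u - v) = 0 := by
      rw [Matrix.dotProduct_mulVec, ← Matrix.star_mulVec, hv]
      simp
    rw [Matrix.smul_mulVec, dotProduct_smul, Matrix.sub_mulVec,
      dotProduct_sub, h1, h2]
    simp
  rw [hq] at this
  exact lt_irrefl _ this

theorem stmt4 {m : ℕ} (X Y : Matrix (Fin m) (Fin m) ℂ)
    (hX : (matIm X).PosDef) (hY : (matIm Y).PosDef) :
    matIm (X * (X + Y)⁻¹ * Y) =
      Y * (X + Y)⁻¹ * matIm X * ((X + Y)ᴴ)⁻¹ * Yᴴ +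
        X * (X + Y)⁻¹ * matIm Y * ((X + Y)ᴴ)⁻¹ * Xᴴ := by
  set S := X + Y with hS
  have hImS : matIm S = matIm X + matIm Y := by
    simp only [matIm, hS, conjTranspose_add, smul_sub, smul_add]
    abel
  have hSdet : IsUnit S.det := isUnit_of_posDef_matIm (by rw [hImS]; exact hX.add_posSemidef hY.posSemidef)
  have hSHdet : IsUnit Sᴴ.det := by
    rw [Matrix.det_conjTranspose]
    exact hSdet.star
  set A := S⁻¹ with hA
  set B := (Sᴴ)⁻¹ with hB
  have hA1 : S * A = 1 := Matrix.mul_nonsing_inv _ hSdet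
  have hA2 : A * S = 1 := Matrix.nonsing_inv_mul _ hSdet
  have hB1 : Sᴴ * B = 1 := Matrix.mul_nonsing_inv _ hSHdet
  have hB2 : B * Sᴴ = 1 := Matrix.nonsing_inv_mul _ hSHdet
  have hAB : Aᴴ = B := by rw [hA, hB, Matrix.conjTranspose_nonsing_inv]
  have hSH : Sᴴ = Xᴴ + Yᴴ := by rw [hS, conjTranspose_add]
  -- commutation identities
  have hcomm : Y * A * X = X * A * Y := by
    have h1 : Y * A * X = X - X * A * X := by
      have : Y = S - X := by rw [hS]; abel
      rw [this]
      calc (S - X) * A * X = S * A * X - X * A * X := by noncomm_ring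
        _ = X - X * A * X := by rw [hA1, one_mul]
    have h2 : X * A * Y = X - X * A * X := by
      have : Y = S - X := by rw [hS]; abel
      rw [this]
      calc X * A * (S - X) = X * (A * S) - X * A * X := by noncomm_ring
        _ = X - X * A * X := by rw [hA2, mul_one]
    rw [h1, h2]
  have hcommH : Xᴴ * B * Yᴴ = Yᴴ * B * Xᴴ := by
    have h1 : Xᴴ * B * Yᴴ = Yᴴ - Yᴴ * B * Yᴴ := by
      have : Xᴴ = Sᴴ - Yᴴ := by rw [hSH]; abel
      rw [this]
      calc (Sᴴ - Yᴴ) * B * Yᴴ = Sᴴ * B * Yᴴ - Yᴴ * B * Yᴴ := by noncomm_ring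
        _ = Yᴴ - Yᴴ * B * Yᴴ := by rw [hB1, one_mul]
    have h2 : Yᴴ * B * Xᴴ = Yᴴ - Yᴴ * B * Yᴴ := by
      have : Xᴴ = Sᴴ - Yᴴ := by rw [hSH]; abel
      rw [this]
      calc Yᴴ * B * (Sᴴ - Yᴴ) = Yᴴ * (B * Sᴴ) - Yᴴ * B * Yᴴ := by noncomm_ring
        _ = Yᴴ - Yᴴ * B * Yᴴ := by rw [hB2, mul_one]
    rw [h1, h2]
  have e1 : Y * A * X * B * Yᴴ + X * A * Y * B * Xᴴ = X * A * Y := by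
    rw [hcomm]
    calc X * A * Y * B * Yᴴ + X * A * Y * B * Xᴴ = X * A * Y * (B * (Xᴴ + Yᴴ)) := by
          noncomm_ring
      _ = X * A * Y := by rw [← hSH, hB2, mul_one]
  have e2 : Y * A * Xᴴ * B * Yᴴ + X * A * Yᴴ * B * Xᴴ = Yᴴ * B * Xᴴ := by
    calc Y * A * Xᴴ * B * Yᴴ + X * A * Yᴴ * B * Xᴴ
        = Y * A * (Xᴴ * B * Yᴴ) + X * A * (Yᴴ * B * Xᴴ) := by noncomm_ring
      _ = Y * A * (Yᴴ * B * Xᴴ) + X * A * (Yᴴ * B * Xᴴ) := by rw [hcommH]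
      _ = (X + Y) * A * (Yᴴ * B * Xᴴ) := by noncomm_ring
      _ = Yᴴ * B * Xᴴ := by rw [← hS, hA1, one_mul]
  have key : X * A * Y - Yᴴ * B * Xᴴ =
      Y * A * (X - Xᴴ) * B * Yᴴ + X * A * (Y - Yᴴ) * B * Xᴴ := by
    rw [← e1, ← e2]
    noncomm_ring
  have hMH : (X * A * Y)ᴴ = Yᴴ * B * Xᴴ := by
    rw [conjTranspose_mul, conjTranspose_mul, hAB, mul_assoc]
  simp only [matIm]
  rw [hMH]
  rw [Matrix.mul_smul, Matrix.smul_mul, Matrix.smul_mul, Matrix.mul_smul,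
    Matrix.smul_mul, Matrix.smul_mul, ← smul_add, key]
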